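/- Let m be a positive integer and P(x) = x^m − 1. Then P ∈ 𝒫, i.e., there are infinitely many positive integers n such that n^m − 1 divides n!. -/

import Mathlib

open Finset Polynomial

/-- `q ^ t * t! ∣ (q*t)!` for `q ≥ 1`. -/
lemma aux_pow_mul_factorial_dvd (q : ℕ) (hq : 0 < q) :
    ∀ t : ℕ, q ^ t * t.factorial ∣ (q * t).factorial := by
  intro t
  induction t with
  | zero => simp
  | succ t ih =>
    have hqe : q * (t + 1) = q * t + q := by ring
    have hqt : q * (t + 1) = (q * t + (q - 1)) + 1 := by omega
    have h1 : (q * t).factorial ∣ (q * t + (q - 1)).factorial :=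
      Nat.factorial_dvd_factorial (Nat.le_add_right _ _)
    have h2 : (q * t + (q - 1)).factorial * (q * (t + 1)) ∣ (q * (t + 1)).factorial := by
      conv_rhs => rw [hqt, Nat.factorial_succ, ← hqt]
      exact (mul_comm _ _).dvd
    calc q ^ (t + 1) * (t + 1).factorial
        = (q ^ t * t.factorial) * (q * (t + 1)) := by
          rw [Nat.factorial_succ]; ring
      _ ∣ (q * t).factorial * (q * (t + 1)) :=
          mul_dvd_mul_right ih _
      _ ∣ (q * t + (q - 1)).factorial * (q * (t + 1)) :=
          mul_dvd_mul_right h1 _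
      _ ∣ (q * (t + 1)).factorial := h2

/-- `q ^ (n / q) ∣ n!` for `q ≥ 1`. -/
lemma aux_pow_div_dvd_factorial (q n : ℕ) (hq : 0 < q) :
    q ^ (n / q) ∣ n.factorial := by
  calc q ^ (n / q) ∣ q ^ (n / q) * (n / q).factorial := dvd_mul_right _ _
    _ ∣ (q * (n / q)).factorial := aux_pow_mul_factorial_dvd q hq _
    _ ∣ n.factorial := Nat.factorial_dvd_factorial (by
        rw [mul_comm]; exact Nat.div_mul_le_self n q)

/-- Mertens-lite: the product of (1 - 1/p) over primes below some bound is ≤ any `c > 0`. -/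
lemma aux_exists_prod_small (c : ℝ) (hc : 0 < c) :
    ∃ z : ℕ, (∏ p ∈ Finset.filter Nat.Prime (Finset.range z), (1 - (p : ℝ)⁻¹)) ≤ c := by
  have hdiv := not_summable_one_div_on_primes
  have hnonneg : ∀ n : ℕ, 0 ≤ ({p | Nat.Prime p}.indicator fun n : ℕ => 1 / (n : ℝ)) n := by
    intro n
    apply Set.indicator_nonneg
    intro a _
    positivity
  rw [not_summable_iff_tendsto_nat_atTop_of_nonneg hnonneg] at hdiv
  obtain ⟨z, hz⟩ := (hdiv.eventually_ge_atTop (-Real.log c)).exists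
  refine ⟨z, ?_⟩
  have hsum : ∑ i ∈ Finset.range z, ({p | Nat.Prime p}.indicator fun n : ℕ => 1 / (n : ℝ)) i
      = ∑ p ∈ Finset.filter Nat.Prime (Finset.range z), 1 / (p : ℝ) := by
    simp [Set.indicator_apply, Finset.sum_filter, Set.mem_setOf_eq]
  rw [hsum] at hz
  have key : ∏ p ∈ Finset.filter Nat.Prime (Finset.range z), (1 - (p : ℝ)⁻¹)
      ≤ Real.exp (-∑ p ∈ Finset.filter Nat.Prime (Finset.range z), 1 / (p : ℝ)) := by
    rw [show -∑ p ∈ Finset.filter Nat.Prime (Finset.range z), 1 / (p : ℝ)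
        = ∑ p ∈ Finset.filter Nat.Prime (Finset.range z), -(1 / (p : ℝ)) from by
      rw [Finset.sum_neg_distrib], Real.exp_sum]
    apply Finset.prod_le_prod
    · intro p hp
      have hp2 : (1 : ℝ) ≤ (p : ℝ) := by
        have := (Finset.mem_filter.mp hp).2.one_lt
        exact_mod_cast this.le
      have : (p : ℝ)⁻¹ ≤ 1 := inv_le_one_of_one_le₀ hp2
      linarith
    · intro p hp
      have := Real.add_one_le_exp (-(1 / (p : ℝ)))
      have h1 : 1 - (p : ℝ)⁻¹ = -(1 / (p : ℝ)) + 1 := by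
        rw [one_div]; ring
      linarith
  refine key.trans ?_
  rw [← Real.exp_log hc]
  exact Real.exp_le_exp.mpr (by linarith)

/-- There is `P ≥ 2` with `2 * φ(m*P) ≤ P`. -/
lemma aux_exists_P (m : ℕ) (hm : 0 < m) :
    ∃ P : ℕ, 2 ≤ P ∧ 2 * Nat.totient (m * P) ≤ P := by
  obtain ⟨z, hz⟩ := aux_exists_prod_small ((2 * m : ℝ))⁻¹ (by positivity)
  set S := Finset.filter Nat.Prime (Finset.range z) with hS
  set P := ∏ p ∈ S, p with hPdef
  have hSne : S.Nonempty := by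
    rw [Finset.nonempty_iff_ne_empty]
    intro h
    rw [h, Finset.prod_empty] at hz
    have h2m : (2 : ℝ) ≤ 2 * m := by
      have h1 : (1 : ℝ) ≤ m := Nat.one_le_cast.mpr hm
      linarith
    have hinv : ((2 * m : ℝ))⁻¹ ≤ 2⁻¹ := inv_anti₀ (by norm_num) h2m
    norm_num at hz hinv
    linarith
  have hPpos : 0 < P := Finset.prod_pos fun p hp => (Finset.mem_filter.mp hp).2.pos
  obtain ⟨p0, hp0⟩ := hSne
  have hP2 : 2 ≤ P := le_trans (Finset.mem_filter.mp hp0).2.two_le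
    (Finset.single_le_prod' (fun p hp => (Finset.mem_filter.mp hp).2.one_lt.le) hp0)
  refine ⟨P, hP2, ?_⟩
  set K := m * P with hK
  have hKpos : 0 < K := Nat.mul_pos hm hPpos
  -- Euler's product formula, cast to ℝ
  have heuler : (Nat.totient K : ℝ) = (K : ℝ) * ∏ p ∈ K.primeFactors, (1 - (p : ℝ)⁻¹) := by
    have h := Nat.totient_eq_mul_prod_factors K
    have h2 := congrArg (fun q : ℚ => (q : ℝ)) h
    push_cast at h2 ⊢
    convert h2 using 2
  -- S ⊆ K.primeFactors
  have hsub : S ⊆ K.primeFactors := by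
    intro p hp
    rw [Nat.mem_primeFactors]
    refine ⟨(Finset.mem_filter.mp hp).2, ?_, hKpos.ne'⟩
    exact dvd_mul_of_dvd_right (Finset.dvd_prod_of_mem _ hp) m
  have hprodnn : ∀ p ∈ K.primeFactors, (0:ℝ) ≤ 1 - (p : ℝ)⁻¹ := by
    intro p hp
    have : (1 : ℝ) ≤ (p : ℝ) := by
      exact_mod_cast (Nat.prime_of_mem_primeFactors hp).one_lt.le
    have := inv_le_one_of_one_le₀ this
    linarith
  have hmono : ∏ p ∈ K.primeFactors, (1 - (p : ℝ)⁻¹) ≤ ∏ p ∈ S, (1 - (p : ℝ)⁻¹) := by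
    rw [← Finset.prod_sdiff hsub]
    have h1 : ∏ p ∈ K.primeFactors \ S, (1 - (p : ℝ)⁻¹) ≤ 1 := by
      apply Finset.prod_le_one
      · intro p hp; exact hprodnn p (Finset.mem_sdiff.mp hp).1
      · intro p hp
        have : (0:ℝ) ≤ (p : ℝ)⁻¹ := by positivity
        linarith
    have h2 : (0:ℝ) ≤ ∏ p ∈ S, (1 - (p : ℝ)⁻¹) :=
      Finset.prod_nonneg fun p hp => hprodnn p (hsub hp)
    calc (∏ p ∈ K.primeFactors \ S, (1 - (p : ℝ)⁻¹)) * ∏ p ∈ S, (1 - (p : ℝ)⁻¹)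
        ≤ 1 * ∏ p ∈ S, (1 - (p : ℝ)⁻¹) := mul_le_mul_of_nonneg_right h1 h2
      _ = _ := one_mul _
  -- conclude
  have hfinal : (Nat.totient K : ℝ) ≤ (K : ℝ) * ((2 * m : ℝ))⁻¹ := by
    rw [heuler]
    apply mul_le_mul_of_nonneg_left (hmono.trans hz) (by positivity)
  have h2m : (0:ℝ) < 2 * m := by positivity
  have : (2 * m : ℝ) * (Nat.totient K : ℝ) ≤ (K : ℝ) := by
    rw [mul_comm]
    calc (Nat.totient K : ℝ) * (2 * m) ≤ ((K : ℝ) * ((2 * m : ℝ))⁻¹) * (2 * m) := by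
          apply mul_le_mul_of_nonneg_right hfinal h2m.le
      _ = (K : ℝ) := by field_simp
  have hnat : 2 * m * Nat.totient K ≤ K := by exact_mod_cast this
  rw [hK] at hnat
  have hq : m * (2 * Nat.totient (m * P)) ≤ m * P := by
    calc m * (2 * Nat.totient (m * P)) = 2 * m * Nat.totient (m * P) := by ring
      _ ≤ m * P := hnat
  exact Nat.le_of_mul_le_mul_left hq hm


/-- Any prime divisor `q` of `b^K - 1` satisfies `q ≤ (b+1)^φ(K)`. -/
lemma aux_prime_bound {b K q : ℕ} (hb : 2 ≤ b) (hK : 0 < K) (hq : q.Prime)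
    (hdvd : q ∣ b ^ K - 1) : q ≤ (b + 1) ^ Nat.totient K := by
  have hb1 : (1 : ℤ) < (b : ℤ) := by exact_mod_cast hb
  have hbK : 1 ≤ b ^ K := Nat.one_le_pow _ _ (by omega)
  have hzdvd : (q : ℤ) ∣ (b : ℤ) ^ K - 1 := by
    have := Int.natCast_dvd_natCast.mpr hdvd
    rwa [Nat.cast_sub hbK, Nat.cast_pow, Nat.cast_one] at this
  have hprod : (b : ℤ) ^ K - 1 = ∏ d ∈ K.divisors, (cyclotomic d ℤ).eval (b : ℤ) := by
    have h := Polynomial.prod_cyclotomic_eq_X_pow_sub_one hK ℤ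
    have h2 := congrArg (Polynomial.eval ((b : ℤ))) h
    simpa [Polynomial.eval_prod] using h2.symm
  rw [hprod] at hzdvd
  obtain ⟨d, hdmem, hddvd⟩ :=
    (Nat.prime_iff_prime_int.mp hq).exists_mem_finset_dvd hzdvd
  obtain ⟨hdK, -⟩ := Nat.mem_divisors.mp hdmem
  have hdpos : 0 < d := Nat.pos_of_mem_divisors hdmem
  have hpos : 0 < (cyclotomic d ℤ).eval (b : ℤ) := Polynomial.cyclotomic_pos' d hb1
  have hqle : (q : ℤ) ≤ (cyclotomic d ℤ).eval (b : ℤ) := Int.le_of_dvd hpos hddvd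
  -- transfer to ℝ
  have hev : (((cyclotomic d ℤ).eval ((b : ℕ) : ℤ) : ℤ) : ℝ) = (cyclotomic d ℝ).eval ((b : ℕ) : ℝ) := by
    have := Polynomial.cyclotomic.eval_apply (b : ℤ) d (Int.castRingHom ℝ)
    simp only [Int.coe_castRingHom] at this
    rw [← this]
    norm_num
  have hbR : (1 : ℝ) < ((b : ℕ) : ℝ) := by exact_mod_cast hb1
  have hbound : (cyclotomic d ℝ).eval ((b : ℕ) : ℝ) ≤ (((b : ℕ) : ℝ) + 1) ^ Nat.totient d := by
    rcases lt_or_ge d 3 with hd3 | hd3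
    · interval_cases d
      · simp [Polynomial.cyclotomic_one]
        linarith
      · simp [Polynomial.cyclotomic_two, Nat.totient_two]
    · exact (Polynomial.cyclotomic_eval_lt_add_one_pow_totient hd3 hbR).le
  have htot : Nat.totient d ≤ Nat.totient K :=
    Nat.le_of_dvd (Nat.totient_pos.mpr hK) (Nat.totient_dvd_of_dvd hdK)
  have hmono : (((b : ℕ) : ℝ) + 1) ^ Nat.totient d ≤ (((b : ℕ) : ℝ) + 1) ^ Nat.totient K := by
    apply pow_le_pow_right₀ (by linarith) htot
  have : (q : ℝ) ≤ (((b : ℕ) : ℝ) + 1) ^ Nat.totient K := by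
    have hq' : (q : ℝ) ≤ (((cyclotomic d ℤ).eval ((b : ℕ) : ℤ) : ℤ) : ℝ) := by exact_mod_cast hqle
    calc (q : ℝ) ≤ _ := hq'
      _ = _ := hev
      _ ≤ _ := hbound
      _ ≤ _ := hmono
  exact_mod_cast this


lemma aux_sq_le : ∀ s : ℕ, 4 ≤ s → 3 * s * s ≤ 4 ^ s := by
  intro s hs
  induction s, hs using Nat.le_induction with
  | base => norm_num
  | succ s hs ih =>
    have h4 : 4 ^ (s + 1) = 4 * 4 ^ s := by ring
    nlinarith [ih]

theorem stmt_13 (m : ℕ) (hm : 0 < m) :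
    ∀ N : ℕ, ∃ n : ℕ, N < n ∧ ((n : ℤ) ^ m - 1) ∣ (n.factorial : ℤ) := by
  intro N
  obtain ⟨P, hP2, hPtot⟩ := aux_exists_P m hm
  set s := max (max (P * m) 4) (N + 1) with hs
  set t := 2 * s + 1 with ht
  set n := 2 ^ (t * P) with hn
  have hs4 : 4 ≤ s := le_trans (le_max_right _ _) (le_max_left _ _)
  have hsPm : P * m ≤ s := le_trans (le_max_left _ _) (le_max_left _ _)
  have hsN : N + 1 ≤ s := le_max_right _ _
  have hPpos : 0 < P := by omega
  have htP : t ≤ t * P := Nat.le_mul_of_pos_right _ hPpos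
  have hnt : t * P < n := Nat.lt_two_pow_self
  have hNn : N < n := by omega
  have htPpos : 0 < t * P := by positivity
  have hn2 : 2 ≤ n := by
    calc 2 = 2 ^ 1 := (pow_one 2).symm
      _ ≤ 2 ^ (t * P) := Nat.pow_le_pow_right (by norm_num) htPpos
  have hnm1pos : 1 ≤ n ^ m := Nat.one_le_pow _ _ (by omega)
  have hnm2 : 2 ≤ n ^ m := le_trans hn2 (Nat.le_self_pow hm.ne' n)
  have hne : n ^ m - 1 ≠ 0 := by omega
  set K := m * P with hK
  have hKpos : 0 < K := Nat.mul_pos hm hPpos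
  set b := 2 ^ t with hb
  have hb2 : 2 ≤ b := by
    calc 2 = 2 ^ 1 := (pow_one 2).symm
      _ ≤ 2 ^ t := Nat.pow_le_pow_right (by norm_num) (by omega)
  have hbK : b ^ K = n ^ m := by
    rw [hb, hn, ← pow_mul, ← pow_mul]
    congr 1
    ring
  have hdd : (n ^ m - 1) ∣ n.factorial := by
    rw [← Nat.factorization_le_iff_dvd hne (Nat.factorial_ne_zero n), Finsupp.le_def]
    intro q
    by_cases hq : q.Prime
    swap
    · simp [Nat.factorization_eq_zero_of_not_prime _ hq]
    set v := (n ^ m - 1).factorization q with hv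
    rcases Nat.eq_zero_or_pos v with hv0 | hvpos
    · rw [hv0]; exact Nat.zero_le _
    have hqv : q ^ v ∣ n ^ m - 1 := Nat.ordProj_dvd _ _
    have hqdvd : q ∣ n ^ m - 1 := dvd_trans (dvd_pow_self q hvpos.ne') hqv
    have hqb : q ∣ b ^ K - 1 := by rwa [hbK]
    have hqbound : q ≤ (b + 1) ^ Nat.totient K := aux_prime_bound hb2 hKpos hq hqb
    have hqA : q ≤ 2 ^ ((t + 1) * Nat.totient K) := by
      calc q ≤ (b + 1) ^ Nat.totient K := hqbound
        _ ≤ (2 ^ (t + 1)) ^ Nat.totient K := by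
            apply Nat.pow_le_pow_left
            have h1 : (1:ℕ) ≤ 2 ^ t := Nat.one_le_two_pow
            calc b + 1 = 2 ^ t + 1 := by rw [hb]
              _ ≤ 2 ^ t + 2 ^ t := by omega
              _ = 2 ^ (t + 1) := by ring
        _ = 2 ^ ((t + 1) * Nat.totient K) := by rw [← pow_mul]
    have hexp : (t + 1) * Nat.totient K + s * P ≤ t * P := by
      have h1 : (t + 1) * Nat.totient K = (s + 1) * (2 * Nat.totient K) := by rw [ht]; ring
      have h2 : (s + 1) * (2 * Nat.totient K) ≤ (s + 1) * P :=
        Nat.mul_le_mul_left _ hPtot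
      have h3 : t * P = (s + 1) * P + s * P := by rw [ht]; ring
      omega
    have hvle : v ≤ t * P * m := by
      have h1 : q ^ v ≤ n ^ m - 1 := Nat.le_of_dvd (by omega) hqv
      have h2 : 2 ^ v ≤ q ^ v := Nat.pow_le_pow_left hq.two_le v
      have h3 : 2 ^ v < 2 ^ (t * P * m) := by
        calc 2 ^ v ≤ q ^ v := h2
          _ ≤ n ^ m - 1 := h1
          _ < n ^ m := by omega
          _ = 2 ^ (t * P * m) := by rw [hn, ← pow_mul]
      exact le_of_lt ((Nat.pow_lt_pow_iff_right (by norm_num)).mp h3)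
    have hsmall : t * P * m ≤ 2 ^ (s * P) := by
      calc t * P * m = (2 * s + 1) * (P * m) := by rw [ht]; ring
        _ ≤ (2 * s + 1) * s := Nat.mul_le_mul_left _ hsPm
        _ ≤ 3 * s * s := by nlinarith
        _ ≤ 4 ^ s := aux_sq_le s hs4
        _ = 2 ^ (2 * s) := by rw [pow_mul]; norm_num
        _ ≤ 2 ^ (s * P) := Nat.pow_le_pow_right (by norm_num) (by nlinarith)
    have hqn : q * (t * P * m) ≤ n := by
      calc q * (t * P * m) ≤ 2 ^ ((t + 1) * Nat.totient K) * 2 ^ (s * P) :=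
            Nat.mul_le_mul hqA hsmall
        _ = 2 ^ ((t + 1) * Nat.totient K + s * P) := (pow_add 2 _ _).symm
        _ ≤ 2 ^ (t * P) := Nat.pow_le_pow_right (by norm_num) hexp
        _ = n := hn.symm
    have hvnq : v ≤ n / q := by
      rw [Nat.le_div_iff_mul_le hq.pos]
      calc v * q ≤ (t * P * m) * q := Nat.mul_le_mul_right _ hvle
        _ = q * (t * P * m) := mul_comm _ _
        _ ≤ n := hqn
    have hfin : q ^ v ∣ n.factorial :=
      dvd_trans (pow_dvd_pow q hvnq) (aux_pow_div_dvd_factorial q n hq.pos)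
    exact (hq.pow_dvd_iff_le_factorization (Nat.factorial_ne_zero n)).mp hfin
  refine ⟨n, hNn, ?_⟩
  have hcast : ((n ^ m - 1 : ℕ) : ℤ) = (n : ℤ) ^ m - 1 := by
    push_cast [hnm1pos]
    ring
  rw [← hcast]
  exact Int.natCast_dvd_natCast.mpr hdd
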